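/- Let r, n, m ≥ 1 and let P : ℤ^r → ℂ^{m×n} be the symbol of an m×n system of Fourier multipliers on the torus 𝕋^r. Then the following are equivalent: (i) for every u : ℤ^r → ℂ^n of polynomial growth such that ξ ↦ P(ξ)u(ξ) ∈ ℂ^m is rapidly decreasing, u is itself rapidly decreasing; (ii) there exist C > 0, k ∈ ℝ and a finite set F ⊆ ℤ^r such that λ_min(P(ξ)) ≥ C(1+‖ξ‖²)^{k/2} for all ξ ∈ ℤ^r \ F. -/

import Mathlib

noncomputable section

open scoped BigOperators

/-- Euclidean (ℓ²) norm of a complex vector. -/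
def l2norm {n : Type*} [Fintype n] (v : n → ℂ) : ℝ :=
  Real.sqrt (∑ i, ‖v i‖ ^ 2)

/-- Smallest singular value of a complex matrix, characterized as the infimum of
`‖A v‖₂` over unit vectors `v`. -/
def sminVal {m n : Type*} [Fintype m] [Fintype n] (A : Matrix m n ℂ) : ℝ :=
  sInf {x : ℝ | ∃ v : n → ℂ, l2norm v = 1 ∧ x = l2norm (A.mulVec v)}

/-- The weight `1 + ‖ξ‖²` for a frequency `ξ ∈ ℤ^r`. -/
def wt {r : ℕ} (ξ : Fin r → ℤ) : ℝ :=
  1 + ∑ i, ((ξ i : ℝ)) ^ 2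

/-- A vector-valued sequence indexed by `ℤ^r` is rapidly decreasing. -/
def RapidDecayV {r n : ℕ} (u : (Fin r → ℤ) → (Fin n → ℂ)) : Prop :=
  ∀ M : ℝ, 0 < M → ∃ C : ℝ, 0 < C ∧ ∀ ξ, l2norm (u ξ) ≤ C * wt ξ ^ (-(M / 2))

/-- A vector-valued sequence indexed by `ℤ^r` has polynomial growth. -/
def PolyGrowthV {r n : ℕ} (u : (Fin r → ℤ) → (Fin n → ℂ)) : Prop :=
  ∃ C N : ℝ, 0 < C ∧ 0 < N ∧ ∀ ξ, l2norm (u ξ) ≤ C * wt ξ ^ (N / 2)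

lemma l2norm_eq_norm {n : Type*} [Fintype n] (v : n → ℂ) :
    l2norm v = ‖(WithLp.equiv 2 (n → ℂ)).symm v‖ := by
  rw [EuclideanSpace.norm_eq]; rfl

lemma l2norm_nonneg {n : Type*} [Fintype n] (v : n → ℂ) : 0 ≤ l2norm v :=
  Real.sqrt_nonneg _

lemma l2norm_zero {n : Type*} [Fintype n] : l2norm (0 : n → ℂ) = 0 := by
  simp [l2norm]

lemma l2norm_eq_zero_iff {n : Type*} [Fintype n] {v : n → ℂ} : l2norm v = 0 ↔ v = 0 := by
  rw [l2norm_eq_norm, norm_eq_zero]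
  constructor
  · intro h; have := congrArg (WithLp.equiv 2 (n → ℂ)) h; simpa using this
  · rintro rfl; simp

lemma l2norm_pos {n : Type*} [Fintype n] {v : n → ℂ} (h : v ≠ 0) : 0 < l2norm v :=
  lt_of_le_of_ne (l2norm_nonneg v) (fun he => h (l2norm_eq_zero_iff.mp he.symm))

lemma l2norm_smul {n : Type*} [Fintype n] (c : ℂ) (v : n → ℂ) :
    l2norm (c • v) = ‖c‖ * l2norm v := by
  rw [l2norm_eq_norm, l2norm_eq_norm, (show (WithLp.equiv 2 (n → ℂ)).symm (c • v) = c • (WithLp.equiv 2 (n → ℂ)).symm v from rfl), norm_smul]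

lemma exists_l2norm_one {n : ℕ} (hn : 1 ≤ n) : ∃ v : Fin n → ℂ, l2norm v = 1 := by
  refine ⟨Pi.single ⟨0, hn⟩ 1, ?_⟩
  have : (Pi.single (⟨0, hn⟩ : Fin n) (1:ℂ)) =
      (WithLp.equiv 2 (Fin n → ℂ)) (EuclideanSpace.single ⟨0, hn⟩ 1) := rfl
  rw [l2norm_eq_norm, this]
  simp [EuclideanSpace.norm_single]

lemma sminSet_nonempty {m n : ℕ} (hn : 1 ≤ n) (A : Matrix (Fin m) (Fin n) ℂ) :
    {x : ℝ | ∃ v : Fin n → ℂ, l2norm v = 1 ∧ x = l2norm (A.mulVec v)}.Nonempty := by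
  obtain ⟨v, hv⟩ := exists_l2norm_one hn
  exact ⟨l2norm (A.mulVec v), v, hv, rfl⟩

lemma sminSet_bdd {m n : Type*} [Fintype m] [Fintype n] (A : Matrix m n ℂ) :
    BddBelow {x : ℝ | ∃ v : n → ℂ, l2norm v = 1 ∧ x = l2norm (A.mulVec v)} := by
  refine ⟨0, ?_⟩
  rintro x ⟨v, -, rfl⟩
  exact l2norm_nonneg _

lemma sminVal_nonneg {m n : Type*} [Fintype m] [Fintype n] (A : Matrix m n ℂ) :
    0 ≤ sminVal A := by
  apply Real.sInf_nonneg
  rintro x ⟨v, -, rfl⟩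
  exact l2norm_nonneg _

lemma sminVal_mul_le {m n : Type*} [Fintype m] [Fintype n] (A : Matrix m n ℂ) (v : n → ℂ) :
    sminVal A * l2norm v ≤ l2norm (A.mulVec v) := by
  rcases eq_or_ne v 0 with rfl | hv
  · simp [Matrix.mulVec_zero, l2norm_zero]
  · have hc : 0 < l2norm v := l2norm_pos hv
    set c := l2norm v with hcdef
    have hw : l2norm ((((c : ℝ) : ℂ))⁻¹ • v) = 1 := by
      rw [l2norm_smul, norm_inv, Complex.norm_real, Real.norm_eq_abs, abs_of_pos hc]
      field_simp
      exact hcdef.symm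
    have hmem : l2norm (A.mulVec ((((c : ℝ) : ℂ))⁻¹ • v)) ∈
        {x : ℝ | ∃ w : n → ℂ, l2norm w = 1 ∧ x = l2norm (A.mulVec w)} :=
      ⟨_, hw, rfl⟩
    have hle : sminVal A ≤ l2norm (A.mulVec ((((c : ℝ) : ℂ))⁻¹ • v)) :=
      csInf_le (sminSet_bdd A) hmem
    rw [Matrix.mulVec_smul, l2norm_smul, norm_inv, Complex.norm_real, Real.norm_eq_abs,
      abs_of_pos hc] at hle
    calc sminVal A * c ≤ (c⁻¹ * l2norm (A.mulVec v)) * c :=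
          mul_le_mul_of_nonneg_right hle hc.le
    _ = l2norm (A.mulVec v) := by field_simp

lemma exists_unit_lt {m n : ℕ} (hn : 1 ≤ n) (A : Matrix (Fin m) (Fin n) ℂ) {b : ℝ}
    (h : sminVal A < b) : ∃ v : Fin n → ℂ, l2norm v = 1 ∧ l2norm (A.mulVec v) < b := by
  obtain ⟨x, ⟨v, hv1, rfl⟩, hlt⟩ := exists_lt_of_csInf_lt (sminSet_nonempty hn A) h
  exact ⟨v, hv1, hlt⟩

lemma one_le_wt {r : ℕ} (ξ : Fin r → ℤ) : 1 ≤ wt ξ := by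
  have : (0:ℝ) ≤ ∑ i, ((ξ i : ℝ)) ^ 2 := Finset.sum_nonneg fun i _ => sq_nonneg _
  simp [wt]; linarith

lemma wt_pos {r : ℕ} (ξ : Fin r → ℤ) : 0 < wt ξ := lt_of_lt_of_le one_pos (one_le_wt ξ)

lemma wt_finite (r : ℕ) (R : ℝ) : {ξ : Fin r → ℤ | wt ξ ≤ R}.Finite := by
  apply Set.Finite.subset (Set.Finite.pi (fun i : Fin r => Set.finite_Icc (-(⌈R⌉)) ⌈R⌉))
  intro ξ hξ
  simp only [Set.mem_setOf_eq] at hξ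
  simp only [Set.mem_pi, Set.mem_univ, Set.mem_Icc, forall_true_left]
  intro i
  have hR : (1:ℝ) ≤ R := le_trans (one_le_wt ξ) hξ
  have hsq : ((ξ i : ℝ))^2 ≤ wt ξ - 1 := by
    have h : ((ξ i:ℝ))^2 ≤ ∑ j, ((ξ j:ℝ))^2 :=
      Finset.single_le_sum (f := fun j => ((ξ j:ℝ))^2) (fun j _ => sq_nonneg _) (Finset.mem_univ i)
    simp only [wt]; linarith
  have hz : (|ξ i| : ℤ) ≤ (ξ i)^2 := by nlinarith [sq_nonneg (|ξ i| - 1), sq_abs (ξ i), abs_nonneg (ξ i)]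
  have hzr : ((|ξ i| : ℤ) : ℝ) ≤ ((ξ i : ℝ))^2 := by exact_mod_cast hz
  have habs : ((|ξ i| : ℤ) : ℝ) ≤ R := by linarith
  constructor
  · have h1 : ((-(ξ i) : ℤ) : ℝ) ≤ R := by
      push_cast at habs ⊢
      calc (-(ξ i : ℝ)) ≤ |(ξ i : ℝ)| := neg_le_abs _
      _ ≤ R := by push_cast at habs; simpa using habs
    have h2 : ((-(ξ i) : ℤ) : ℝ) ≤ (⌈R⌉ : ℝ) := le_trans h1 (Int.le_ceil R)
    have : -(ξ i) ≤ ⌈R⌉ := by exact_mod_cast h2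
    omega
  · have h1 : ((ξ i : ℤ) : ℝ) ≤ R := by
      calc ((ξ i : ℤ) : ℝ) ≤ |(ξ i : ℝ)| := le_abs_self _
      _ ≤ R := by push_cast at habs; simpa using habs
    have h2 : ((ξ i : ℤ) : ℝ) ≤ (⌈R⌉ : ℝ) := le_trans h1 (Int.le_ceil R)
    exact_mod_cast h2

theorem dir2 (r n m : ℕ) (hr : 1 ≤ r) (hn : 1 ≤ n) (hm : 1 ≤ m)
    (P : (Fin r → ℤ) → Matrix (Fin m) (Fin n) ℂ)
    (h : ∃ (C : ℝ) (k : ℝ) (F : Set (Fin r → ℤ)), 0 < C ∧ F.Finite ∧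
        ∀ ξ, ξ ∉ F → sminVal (P ξ) ≥ C * wt ξ ^ (k / 2)) :
    ∀ u : (Fin r → ℤ) → (Fin n → ℂ), PolyGrowthV u →
        RapidDecayV (fun ξ => (P ξ).mulVec (u ξ)) → RapidDecayV u := by
  obtain ⟨C, k, F, hC, hF, hbound⟩ := h
  rintro u - hPu M hM
  set M' : ℝ := max (M - k) 1 with hM'def
  have hM' : (0:ℝ) < M' := lt_of_lt_of_le one_pos (le_max_right _ _)
  obtain ⟨C₁, hC₁, hP1⟩ := hPu M' hM'
  classical
  set D : ℝ := ∑ ξ ∈ hF.toFinset, l2norm (u ξ) * wt ξ ^ (M/2) with hDdef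
  have hD : 0 ≤ D := Finset.sum_nonneg fun ξ _ =>
    mul_nonneg (l2norm_nonneg _) (Real.rpow_nonneg (wt_pos ξ).le _)
  have hCdiv : 0 ≤ C₁ / C := div_nonneg hC₁.le hC.le
  refine ⟨C₁ / C + D + 1, by positivity, fun ξ => ?_⟩
  have hwp := wt_pos ξ
  have hrpow_nonneg : (0:ℝ) ≤ wt ξ ^ (-(M/2)) := Real.rpow_nonneg hwp.le _
  by_cases hmem : ξ ∈ F
  · have h1 : l2norm (u ξ) * wt ξ ^ (M/2) ≤ D :=
      Finset.single_le_sum (f := fun ξ => l2norm (u ξ) * wt ξ ^ (M/2))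
        (fun ξ _ => mul_nonneg (l2norm_nonneg _) (Real.rpow_nonneg (wt_pos ξ).le _))
        (hF.mem_toFinset.mpr hmem)
    have heq : l2norm (u ξ) = (l2norm (u ξ) * wt ξ ^ (M/2)) * wt ξ ^ (-(M/2)) := by
      rw [mul_assoc, ← Real.rpow_add hwp, add_neg_cancel, Real.rpow_zero, mul_one]
    rw [heq]
    refine le_trans (mul_le_mul_of_nonneg_right h1 hrpow_nonneg) ?_
    apply mul_le_mul_of_nonneg_right _ hrpow_nonneg
    linarith
  · have hs := hbound ξ hmem
    have key : C * wt ξ ^ (k/2) * l2norm (u ξ) ≤ C₁ * wt ξ ^ (-(M'/2)) :=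
      calc C * wt ξ ^ (k/2) * l2norm (u ξ) ≤ sminVal (P ξ) * l2norm (u ξ) :=
            mul_le_mul_of_nonneg_right hs (l2norm_nonneg _)
      _ ≤ l2norm ((P ξ).mulVec (u ξ)) := sminVal_mul_le _ _
      _ ≤ C₁ * wt ξ ^ (-(M'/2)) := hP1 ξ
    have hpos : (0:ℝ) < C * wt ξ ^ (k/2) := by positivity
    have hw : wt ξ ^ (k/2) * wt ξ ^ (-(M'/2) - k/2) = wt ξ ^ (-(M'/2)) := by
      rw [← Real.rpow_add hwp]; ring_nf
    have hCC : C * (C₁ / C) = C₁ := by field_simp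
    have heq : C * wt ξ ^ (k/2) * ((C₁/C) * wt ξ ^ (-(M'/2) - k/2))
        = C₁ * wt ξ ^ (-(M'/2)) := by
      calc C * wt ξ ^ (k/2) * ((C₁/C) * wt ξ ^ (-(M'/2) - k/2))
          = (C * (C₁/C)) * (wt ξ ^ (k/2) * wt ξ ^ (-(M'/2) - k/2)) := by ring
      _ = C₁ * wt ξ ^ (-(M'/2)) := by rw [hw, hCC]
    have h2 : l2norm (u ξ) ≤ (C₁ / C) * wt ξ ^ (-(M'/2) - k/2) := by
      rw [← mul_le_mul_iff_right₀ hpos]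
      exact key.trans_eq heq.symm
    have hexp : -(M'/2) - k/2 ≤ -(M/2) := by
      have h4 : M - k ≤ M' := hM'def ▸ le_max_left _ _
      linarith
    have h3 : wt ξ ^ (-(M'/2) - k/2) ≤ wt ξ ^ (-(M/2)) :=
      Real.rpow_le_rpow_of_exponent_le (one_le_wt ξ) hexp
    calc l2norm (u ξ) ≤ (C₁ / C) * wt ξ ^ (-(M'/2) - k/2) := h2
    _ ≤ (C₁ / C) * wt ξ ^ (-(M/2)) := mul_le_mul_of_nonneg_left h3 hCdiv
    _ ≤ (C₁ / C + D + 1) * wt ξ ^ (-(M/2)) := by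
        apply mul_le_mul_of_nonneg_right _ hrpow_nonneg; linarith

set_option maxHeartbeats 1000000 in
theorem dir1 (r n m : ℕ) (hr : 1 ≤ r) (hn : 1 ≤ n) (hm : 1 ≤ m)
    (P : (Fin r → ℤ) → Matrix (Fin m) (Fin n) ℂ)
    (H : ∀ u : (Fin r → ℤ) → (Fin n → ℂ), PolyGrowthV u →
        RapidDecayV (fun ξ => (P ξ).mulVec (u ξ)) → RapidDecayV u) :
    ∃ (C : ℝ) (k : ℝ) (F : Set (Fin r → ℤ)), 0 < C ∧ F.Finite ∧
        ∀ ξ, ξ ∉ F → sminVal (P ξ) ≥ C * wt ξ ^ (k / 2) := by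
  classical
  by_contra hcon
  push_neg at hcon
  have hstep : ∀ j : ℕ, ∃ ξ : Fin r → ℤ, (j:ℝ) < wt ξ ∧ sminVal (P ξ) < wt ξ ^ (-(j:ℝ)) := by
    intro j
    obtain ⟨ξ, hmem, hlt⟩ := hcon 1 (-(2*(j:ℝ))) {ξ | wt ξ ≤ (j:ℝ)} one_pos (wt_finite r (j:ℝ))
    refine ⟨ξ, ?_, ?_⟩
    · simpa using (not_le.mp hmem)
    · have he : (-(2*(j:ℝ)))/2 = -(j:ℝ) := by ring
      rwa [he, one_mul] at hlt
  choose ξs hξ₁ hξ₂ using hstep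
  have hvex : ∀ j : ℕ, ∃ v : Fin n → ℂ,
      l2norm v = 1 ∧ l2norm ((P (ξs j)).mulVec v) < wt (ξs j) ^ (-(j:ℝ)) :=
    fun j => exists_unit_lt hn (P (ξs j)) (hξ₂ j)
  choose v hv1 hv2 using hvex
  obtain ⟨J, hJspec⟩ : ∃ J : (Fin r → ℤ) → ℕ, ∀ ξ, (∃ j, ξs j = ξ) → ξs (J ξ) = ξ := by
    refine ⟨fun ξ => if h : ∃ j, ξs j = ξ then h.choose else 0, fun ξ h => ?_⟩
    simp only [dif_pos h]
    exact h.choose_spec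
  obtain ⟨u, hu_pos, hu_neg⟩ : ∃ u : (Fin r → ℤ) → Fin n → ℂ,
      (∀ ξ, (∃ j, ξs j = ξ) → u ξ = v (J ξ)) ∧ (∀ ξ, (¬ ∃ j, ξs j = ξ) → u ξ = 0) :=
    ⟨fun ξ => if h : ∃ j, ξs j = ξ then v (J ξ) else 0,
     fun ξ h => dif_pos h, fun ξ h => dif_neg h⟩
  -- u has polynomial growth
  have hPG : PolyGrowthV u := by
    refine ⟨1, 2, one_pos, two_pos, fun ξ => ?_⟩
    have h2 : (1:ℝ) ≤ wt ξ ^ ((2:ℝ)/2) := by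
      norm_num
      exact one_le_wt ξ
    rw [one_mul]
    refine le_trans ?_ h2
    by_cases h : ∃ j, ξs j = ξ
    · rw [hu_pos ξ h]; exact (hv1 _).le
    · rw [hu_neg ξ h, l2norm_zero]; norm_num
  -- P u is rapidly decreasing
  have hPu : RapidDecayV (fun ξ => (P ξ).mulVec (u ξ)) := by
    intro M hM
    set CM : ℝ := 1 + ∑ j ∈ Finset.range ⌈M/2⌉₊, wt (ξs j) ^ (M/2) with hCMdef
    have hsum0 : (0:ℝ) ≤ ∑ j ∈ Finset.range ⌈M/2⌉₊, wt (ξs j) ^ (M/2) :=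
      Finset.sum_nonneg fun j _ => Real.rpow_nonneg (wt_pos _).le _
    have hCM1 : (1:ℝ) ≤ CM := by rw [hCMdef]; linarith
    refine ⟨CM, lt_of_lt_of_le one_pos hCM1, fun ξ => ?_⟩
    show l2norm ((P ξ).mulVec (u ξ)) ≤ CM * wt ξ ^ (-(M/2))
    have hwp := wt_pos ξ
    have hrn : (0:ℝ) ≤ wt ξ ^ (-(M/2)) := Real.rpow_nonneg hwp.le _
    by_cases h : ∃ j, ξs j = ξ
    · have hξJ : ξs (J ξ) = ξ := hJspec ξ h
      have hval : l2norm ((P ξ).mulVec (u ξ)) < wt ξ ^ (-(J ξ : ℝ)) := by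
        rw [hu_pos ξ h]
        have := hv2 (J ξ)
        rwa [hξJ] at this
      by_cases hcase : M/2 ≤ (J ξ : ℝ)
      · have h3 : wt ξ ^ (-(J ξ : ℝ)) ≤ wt ξ ^ (-(M/2)) :=
          Real.rpow_le_rpow_of_exponent_le (one_le_wt ξ) (neg_le_neg hcase)
        calc l2norm ((P ξ).mulVec (u ξ)) ≤ wt ξ ^ (-(J ξ : ℝ)) := hval.le
        _ ≤ wt ξ ^ (-(M/2)) := h3
        _ = 1 * wt ξ ^ (-(M/2)) := (one_mul _).symm
        _ ≤ CM * wt ξ ^ (-(M/2)) := mul_le_mul_of_nonneg_right hCM1 hrn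
      · push_neg at hcase
        have hJlt : J ξ < ⌈M/2⌉₊ := Nat.lt_ceil.mpr hcase
        have hsum : wt (ξs (J ξ)) ^ (M/2) ≤ ∑ j ∈ Finset.range ⌈M/2⌉₊, wt (ξs j) ^ (M/2) :=
          Finset.single_le_sum (f := fun j => wt (ξs j) ^ (M/2))
            (fun j _ => Real.rpow_nonneg (wt_pos _).le _) (Finset.mem_range.mpr hJlt)
        have hCMge : wt ξ ^ (M/2) ≤ CM := by
          rw [← hξJ, hCMdef]; linarith
        have hone : wt ξ ^ (-(J ξ : ℝ)) ≤ 1 := by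
          rw [show (1:ℝ) = wt ξ ^ (0:ℝ) from (Real.rpow_zero _).symm]
          exact Real.rpow_le_rpow_of_exponent_le (one_le_wt ξ)
            (neg_nonpos.mpr (Nat.cast_nonneg _))
        calc l2norm ((P ξ).mulVec (u ξ)) ≤ 1 := le_trans hval.le hone
        _ = wt ξ ^ (M/2) * wt ξ ^ (-(M/2)) := by
            rw [← Real.rpow_add hwp, add_neg_cancel, Real.rpow_zero]
        _ ≤ CM * wt ξ ^ (-(M/2)) := mul_le_mul_of_nonneg_right hCMge hrn
    · rw [hu_neg ξ h, Matrix.mulVec_zero, l2norm_zero]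
      exact mul_nonneg (le_trans zero_le_one hCM1) hrn
  -- conclude: u is rapidly decreasing, contradiction
  obtain ⟨C, hC, hbb⟩ := H u hPG hPu 2 two_pos
  have hfin : ∀ j : ℕ, (j:ℝ) < C := by
    intro j
    have h1 : l2norm (u (ξs j)) = 1 := by
      rw [hu_pos (ξs j) ⟨j, rfl⟩]; exact hv1 _
    have h2 := hbb (ξs j)
    rw [h1] at h2
    have he : -((2:ℝ)/2) = (-1:ℝ) := by norm_num
    rw [he, Real.rpow_neg_one] at h2
    have hwp := wt_pos (ξs j)
    have h3 : wt (ξs j) ≤ C := by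
      have := mul_le_mul_of_nonneg_right h2 hwp.le
      rwa [one_mul, mul_assoc, inv_mul_cancel₀ hwp.ne', mul_one] at this
    exact lt_of_lt_of_le (hξ₁ j) h3
  have := hfin ⌈C⌉₊
  have h4 := Nat.le_ceil C
  linarith

theorem system_GH_iff (r n m : ℕ) (hr : 1 ≤ r) (hn : 1 ≤ n) (hm : 1 ≤ m)
    (P : (Fin r → ℤ) → Matrix (Fin m) (Fin n) ℂ) :
    (∀ u : (Fin r → ℤ) → (Fin n → ℂ), PolyGrowthV u →
        RapidDecayV (fun ξ => (P ξ).mulVec (u ξ)) → RapidDecayV u) ↔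
      (∃ (C : ℝ) (k : ℝ) (F : Set (Fin r → ℤ)), 0 < C ∧ F.Finite ∧
        ∀ ξ, ξ ∉ F → sminVal (P ξ) ≥ C * wt ξ ^ (k / 2)) := by
  exact ⟨dir1 r n m hr hn hm P, dir2 r n m hr hn hm P⟩
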